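/- For all α = (α_1,…,α_d) ∈ (0,1)^d, all w = (w_1,…,w_d) with w_i > 0, and every n ∈ ℕ_0, the following multivariate integral identity holds: ∫_{ℝ_+^d} [ Σ_{(n_1,…,n_k) ∈ Ω(k,n)} ∏_{j=1}^k ((Λ_j·x)^{n_j}/n_j!) e^{−Λ_j·x} ] ∏_{i=1}^d w_i^{α_i−1} e^{−w_i^{α_i} x_i} dx_1 ⋯ dx_d = Σ_{(n_1,…,n_k) ∈ Ω(k,n)} Σ_{(n_{j1},…,n_{jd}) ∈ Θ(n_j,d) for each j = 1,…,k} (∏_{j=1}^k ∏_{i=1}^d λ_{ji}^{n_{ji}}/n_{ji}!) ∏_{i=1}^d w_i^{α_i−1} Γ(Σ_{j=1}^k n_{ji} + 1) / (w_i^{α_i} + Σ_{j=1}^k λ_{ji})^{Σ_{j=1}^k n_{ji} + 1}. -/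

import Mathlib

open scoped BigOperators

open MeasureTheory Set

lemma myIntegrableOn_pow_exp (M : ℕ) {c : ℝ} (hc : 0 < c) :
    IntegrableOn (fun t : ℝ => t ^ M * Real.exp (-(c * t))) (Set.Ici 0) := by
  rw [integrableOn_Ici_iff_integrableOn_Ioi]
  have h := integrableOn_rpow_mul_exp_neg_mul_rpow (p := 1) (s := M) (b := c)
    (lt_of_lt_of_le neg_one_lt_zero (Nat.cast_nonneg M)) zero_lt_one hc
  refine h.congr_fun (fun t ht => ?_) measurableSet_Ioi
  dsimp only
  rw [Real.rpow_one, Real.rpow_natCast, neg_mul]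

lemma myIntegral_pow_exp (M : ℕ) {c : ℝ} (hc : 0 < c) :
    ∫ t in Set.Ici (0:ℝ), t ^ M * Real.exp (-(c * t)) = M.factorial / c ^ (M + 1) := by
  rw [integral_Ici_eq_integral_Ioi]
  have h := Real.integral_rpow_mul_exp_neg_mul_Ioi (a := (M : ℝ) + 1) (r := c)
    (by positivity) hc
  rw [Real.Gamma_nat_eq_factorial, add_sub_cancel_right] at h
  calc ∫ (t : ℝ) in Ioi 0, t ^ M * Real.exp (-(c * t))
      = ∫ (t : ℝ) in Ioi 0, t ^ (M : ℝ) * Real.exp (-(c * t)) := by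
        refine setIntegral_congr_fun measurableSet_Ioi (fun t ht => ?_)
        rw [Real.rpow_natCast]
    _ = (1 / c) ^ ((M : ℝ) + 1) * ↑M.factorial := h
    _ = ↑M.factorial / c ^ (M + 1) := by
        rw [show ((M : ℝ) + 1) = ((M + 1 : ℕ) : ℝ) by push_cast; ring, Real.rpow_natCast]
        rw [div_pow, one_pow]
        ring

lemma myIndicator_pi_prod {d : ℕ} (g : Fin d → ℝ → ℝ) (x : Fin d → ℝ) :
    (Set.Ici (0 : Fin d → ℝ)).indicator (fun x => ∏ i, g i (x i)) x
      = ∏ i, (Set.Ici (0:ℝ)).indicator (g i) (x i) := by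
  by_cases h : x ∈ Set.Ici (0 : Fin d → ℝ)
  · rw [Set.indicator_of_mem h]
    exact Finset.prod_congr rfl fun i _ => (Set.indicator_of_mem (h i) _).symm
  · rw [Set.indicator_of_notMem h]
    have : ∃ i, ¬ (0 : ℝ) ≤ x i := by
      by_contra hcon
      push_neg at hcon
      exact h fun i => hcon i
    obtain ⟨i, hi⟩ := this
    exact (Finset.prod_eq_zero (Finset.mem_univ i) (Set.indicator_of_notMem hi _)).symm

lemma myIntegral_pi_prod {d : ℕ} (g : Fin d → ℝ → ℝ) :
    ∫ x in Set.Ici (0 : Fin d → ℝ), ∏ i, g i (x i)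
      = ∏ i, ∫ t in Set.Ici (0:ℝ), g i t := by
  rw [← integral_indicator measurableSet_Ici]
  simp_rw [myIndicator_pi_prod]
  rw [MeasureTheory.integral_fintype_prod_volume_eq_prod
    (fun i => (Set.Ici (0:ℝ)).indicator (g i))]
  exact Finset.prod_congr rfl fun i _ => integral_indicator measurableSet_Ici

lemma myIntegrableOn_pi_prod {d : ℕ} (g : Fin d → ℝ → ℝ)
    (hg : ∀ i, IntegrableOn (g i) (Set.Ici 0)) :
    IntegrableOn (fun x : Fin d → ℝ => ∏ i, g i (x i)) (Set.Ici 0) := by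
  refine (integrable_indicator_iff measurableSet_Ici).mp ?_
  have : (Set.Ici (0 : Fin d → ℝ)).indicator (fun x => ∏ i, g i (x i))
      = fun x => ∏ i, (Set.Ici (0:ℝ)).indicator (g i) (x i) := funext (myIndicator_pi_prod g)
  rw [this]
  exact MeasureTheory.Integrable.fintype_prod
    (fun i => (integrable_indicator_iff measurableSet_Ici).2 (hg i))

lemma myCore {k d : ℕ} (lam : Fin k → Fin d → ℝ) (x : Fin d → ℝ) (y : Fin k → ℕ) :
    (∏ j, ((∑ i, lam j i * x i) ^ (y j) / (Nat.factorial (y j))))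
    = ∑ m ∈ Fintype.piFinset (fun j => Finset.piAntidiag Finset.univ (y j)),
        (∏ j, ∏ i, lam j i ^ (m j i) / (Nat.factorial (m j i))) *
          ∏ i, (x i) ^ (∑ j, m j i) := by
  simp_rw [Finset.sum_pow_eq_sum_piAntidiag, Finset.sum_div, Finset.prod_univ_sum]
  refine Finset.sum_congr rfl fun m hm => ?_
  rw [Fintype.mem_piFinset] at hm
  have hsum : ∀ j, ∑ i, m j i = y j := fun j =>
    ((Finset.mem_piAntidiag.mp (hm j)).1)
  have key : ∀ j : Fin k,
      ((Nat.multinomial Finset.univ (m j) : ℝ) * ∏ i, (lam j i * x i) ^ (m j i))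
        / (Nat.factorial (y j))
      = (∏ i, lam j i ^ (m j i) / (Nat.factorial (m j i))) * ∏ i, (x i) ^ (m j i) := by
    intro j
    have hspec : ((∏ i, Nat.factorial (m j i)) * Nat.multinomial Finset.univ (m j) : ℝ)
        = (Nat.factorial (y j) : ℝ) := by
      rw [← hsum j]
      exact_mod_cast congrArg (Nat.cast (R := ℝ)) (Nat.multinomial_spec Finset.univ (m j))
    have h1 : ∀ i : Fin d, ((Nat.factorial (m j i) : ℝ)) ≠ 0 :=
      fun i => Nat.cast_ne_zero.mpr (Nat.factorial_ne_zero _)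
    have h2 : ((Nat.factorial (y j) : ℝ)) ≠ 0 := Nat.cast_ne_zero.mpr (Nat.factorial_ne_zero _)
    simp_rw [mul_pow, Finset.prod_mul_distrib, Finset.prod_div_distrib]
    push_cast at hspec ⊢
    field_simp
    linear_combination (∏ i, lam j i ^ (m j i)) * (∏ i, (x i) ^ (m j i)) * hspec
  calc ∏ j, (((Nat.multinomial Finset.univ (m j) : ℝ) * ∏ i, (lam j i * x i) ^ (m j i))
        / (Nat.factorial (y j)))
      = ∏ j, ((∏ i, lam j i ^ (m j i) / (Nat.factorial (m j i))) * ∏ i, (x i) ^ (m j i)) :=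
        Finset.prod_congr rfl fun j _ => key j
    _ = (∏ j, ∏ i, lam j i ^ (m j i) / (Nat.factorial (m j i))) * ∏ j, ∏ i, (x i) ^ (m j i) :=
        Finset.prod_mul_distrib
    _ = _ := by
        congr 1
        rw [Finset.prod_comm]
        exact Finset.prod_congr rfl fun i _ => Finset.prod_pow_eq_pow_sum _ _ _

lemma myExpand {k d : ℕ} (lam : Fin k → Fin d → ℝ) (alpha w : Fin d → ℝ)
    (y : Fin k → ℕ) (x : Fin d → ℝ) :
    (∏ j, ((∑ i, lam j i * x i) ^ (y j) / (Nat.factorial (y j)) *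
        Real.exp (-(∑ i, lam j i * x i)))) *
      ∏ i, (w i ^ (alpha i - 1) * Real.exp (-(w i ^ alpha i) * x i))
    = ∑ m ∈ Fintype.piFinset (fun j => Finset.piAntidiag Finset.univ (y j)),
        (∏ j, ∏ i, lam j i ^ (m j i) / (Nat.factorial (m j i))) *
          ∏ i, (w i ^ (alpha i - 1) *
            ((x i) ^ (∑ j, m j i) *
              Real.exp (-((w i ^ alpha i + ∑ j, lam j i) * x i)))) := by
  have hswap : ∑ j, ∑ i, lam j i * x i = ∑ i, (∑ j, lam j i) * x i := by
    rw [Finset.sum_comm]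
    exact Finset.sum_congr rfl fun i _ => (Finset.sum_mul _ _ _).symm
  have hprod : ∀ (M : Fin d → ℕ),
      ∏ i, (w i ^ (alpha i - 1) * ((x i) ^ (M i) *
          Real.exp (-((w i ^ alpha i + ∑ j, lam j i) * x i))))
      = (∏ i, w i ^ (alpha i - 1)) * (∏ i, (x i) ^ (M i)) *
          Real.exp (-(∑ i, (w i ^ alpha i + ∑ j, lam j i) * x i)) := by
    intro M
    rw [Finset.prod_mul_distrib, Finset.prod_mul_distrib, ← mul_assoc]
    congr 1
    rw [← Real.exp_sum]
    congr 1
    rw [← Finset.sum_neg_distrib]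
  calc (∏ j, ((∑ i, lam j i * x i) ^ (y j) / (Nat.factorial (y j)) *
        Real.exp (-(∑ i, lam j i * x i)))) *
      ∏ i, (w i ^ (alpha i - 1) * Real.exp (-(w i ^ alpha i) * x i))
      = (∏ j, ((∑ i, lam j i * x i) ^ (y j) / (Nat.factorial (y j)))) *
          ((∏ i, w i ^ (alpha i - 1)) *
            Real.exp (-(∑ i, (w i ^ alpha i + ∑ j, lam j i) * x i))) := by
        rw [Finset.prod_mul_distrib, Finset.prod_mul_distrib, ← Real.exp_sum, ← Real.exp_sum,
          mul_assoc, mul_left_comm (Real.exp _), ← mul_assoc, mul_assoc, ← Real.exp_add]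
        congr 2
        simp only [neg_mul, Finset.sum_neg_distrib]
        rw [hswap, ← neg_add, ← Finset.sum_add_distrib]
        exact congrArg Real.exp (neg_inj.mpr (Finset.sum_congr rfl fun i _ => by ring))
    _ = _ := by
        rw [myCore lam x y, Finset.sum_mul]
        refine Finset.sum_congr rfl fun m hm => ?_
        rw [hprod]
        ring

section Middle

variable {k d : ℕ} (lam : Fin k → Fin d → ℝ) (alpha w : Fin d → ℝ)

lemma myC_pos (hlam : ∀ j i, 0 < lam j i) (hw : ∀ i, 0 < w i) (i : Fin d) :
    0 < w i ^ alpha i + ∑ j, lam j i := by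
  have h1 : 0 < w i ^ alpha i := Real.rpow_pos_of_pos (hw i) _
  have h2 : 0 ≤ ∑ j, lam j i := Finset.sum_nonneg fun j _ => (hlam j i).le
  linarith

lemma myMiddleIntegrable (hlam : ∀ j i, 0 < lam j i) (hw : ∀ i, 0 < w i) (y : Fin k → ℕ) :
    IntegrableOn (fun x : Fin d → ℝ =>
      (∏ j, ((∑ i, lam j i * x i) ^ (y j) / (Nat.factorial (y j)) *
          Real.exp (-(∑ i, lam j i * x i)))) *
        ∏ i, (w i ^ (alpha i - 1) * Real.exp (-(w i ^ alpha i) * x i)))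
      (Set.Ici 0) := by
  have step1 : ∀ m : Fin k → Fin d → ℕ,
      Integrable (fun x : Fin d → ℝ =>
        ∏ i, (w i ^ (alpha i - 1) *
            ((x i) ^ (∑ j, m j i) *
              Real.exp (-((w i ^ alpha i + ∑ j, lam j i) * x i)))))
        (volume.restrict (Set.Ici 0)) := fun m =>
    myIntegrableOn_pi_prod
      (fun i t => w i ^ (alpha i - 1) *
            (t ^ (∑ j, m j i) *
              Real.exp (-((w i ^ alpha i + ∑ j, lam j i) * t))))
      (fun i =>
      ((myIntegrableOn_pow_exp (∑ j, m j i) (myC_pos lam alpha w hlam hw i)).const_mul _))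
  have hsum : IntegrableOn (fun x : Fin d → ℝ =>
      ∑ m ∈ Fintype.piFinset (fun j => Finset.piAntidiag Finset.univ (y j)),
        (∏ j, ∏ i, lam j i ^ (m j i) / (Nat.factorial (m j i))) *
          ∏ i, (w i ^ (alpha i - 1) *
            ((x i) ^ (∑ j, m j i) *
              Real.exp (-((w i ^ alpha i + ∑ j, lam j i) * x i)))))
      (Set.Ici 0) :=
    integrable_finset_sum _ fun m _ => (step1 m).const_mul _
  exact hsum.congr_fun (fun x _ => (myExpand lam alpha w y x).symm) measurableSet_Ici

lemma myMiddle (hlam : ∀ j i, 0 < lam j i) (hw : ∀ i, 0 < w i) (y : Fin k → ℕ) :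
    ∫ x in Set.Ici (0 : Fin d → ℝ),
      (∏ j, ((∑ i, lam j i * x i) ^ (y j) / (Nat.factorial (y j)) *
          Real.exp (-(∑ i, lam j i * x i)))) *
        ∏ i, (w i ^ (alpha i - 1) * Real.exp (-(w i ^ alpha i) * x i))
    = ∑ m ∈ Fintype.piFinset (fun j => Finset.piAntidiag Finset.univ (y j)),
        (∏ j, ∏ i, lam j i ^ (m j i) / (Nat.factorial (m j i))) *
          ∏ i, (w i ^ (alpha i - 1) *
            Real.Gamma ((∑ j, m j i : ℕ) + 1) /
            (w i ^ alpha i + ∑ j, lam j i) ^ ((∑ j, m j i) + 1)) := by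
  have step1 : ∀ m : Fin k → Fin d → ℕ,
      Integrable (fun x : Fin d → ℝ =>
        ∏ i, (w i ^ (alpha i - 1) *
            ((x i) ^ (∑ j, m j i) *
              Real.exp (-((w i ^ alpha i + ∑ j, lam j i) * x i)))))
        (volume.restrict (Set.Ici 0)) := fun m =>
    myIntegrableOn_pi_prod
      (fun i t => w i ^ (alpha i - 1) *
            (t ^ (∑ j, m j i) *
              Real.exp (-((w i ^ alpha i + ∑ j, lam j i) * t))))
      (fun i =>
      ((myIntegrableOn_pow_exp (∑ j, m j i) (myC_pos lam alpha w hlam hw i)).const_mul _))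
  calc ∫ x in Set.Ici (0 : Fin d → ℝ),
      (∏ j, ((∑ i, lam j i * x i) ^ (y j) / (Nat.factorial (y j)) *
          Real.exp (-(∑ i, lam j i * x i)))) *
        ∏ i, (w i ^ (alpha i - 1) * Real.exp (-(w i ^ alpha i) * x i))
      = ∫ x in Set.Ici (0 : Fin d → ℝ),
          ∑ m ∈ Fintype.piFinset (fun j => Finset.piAntidiag Finset.univ (y j)),
            (∏ j, ∏ i, lam j i ^ (m j i) / (Nat.factorial (m j i))) *
              ∏ i, (w i ^ (alpha i - 1) *
                ((x i) ^ (∑ j, m j i) *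
                  Real.exp (-((w i ^ alpha i + ∑ j, lam j i) * x i)))) :=
        setIntegral_congr_fun measurableSet_Ici (fun x _ => myExpand lam alpha w y x)
    _ = ∑ m ∈ Fintype.piFinset (fun j => Finset.piAntidiag Finset.univ (y j)),
          ∫ x in Set.Ici (0 : Fin d → ℝ),
            (∏ j, ∏ i, lam j i ^ (m j i) / (Nat.factorial (m j i))) *
              ∏ i, (w i ^ (alpha i - 1) *
                ((x i) ^ (∑ j, m j i) *
                  Real.exp (-((w i ^ alpha i + ∑ j, lam j i) * x i)))) :=
        integral_finset_sum _ fun m _ => (step1 m).const_mul _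
    _ = _ := by
        refine Finset.sum_congr rfl fun m hm => ?_
        rw [integral_const_mul]
        congr 1
        rw [myIntegral_pi_prod (fun i t => w i ^ (alpha i - 1) *
            (t ^ (∑ j, m j i) *
              Real.exp (-((w i ^ alpha i + ∑ j, lam j i) * t))))]
        refine Finset.prod_congr rfl fun i _ => ?_
        rw [integral_const_mul _ _, myIntegral_pow_exp (∑ j, m j i)
          (myC_pos lam alpha w hlam hw i)]
        rw [show ((∑ j, m j i : ℕ) + 1 : ℝ) = ((∑ j, m j i : ℕ) : ℝ) + 1 by push_cast; ring]
        rw [Real.Gamma_nat_eq_factorial]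
        rw [mul_div_assoc]

end Middle

set_option maxHeartbeats 2000000 in
/-- The Laplace transform (in the time variables) of the distribution of the multiparameter
fractional GCP: for all `α ∈ (0,1)^d`, all `w` with `w_i > 0`, and every `n ∈ ℕ_0`,
`∫_{ℝ_+^d} [Σ_{(n_1,…,n_k) ∈ Ω(k,n)} ∏_j ((Λ_j·x)^{n_j}/n_j!) e^{−Λ_j·x}]
  ∏_i w_i^{α_i−1} e^{−w_i^{α_i} x_i} dx
 = Σ_{(n_1,…,n_k) ∈ Ω(k,n)} Σ_{(n_{j1},…,n_{jd}) ∈ Θ(n_j,d), j=1,…,k}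
   (∏_j ∏_i λ_{ji}^{n_{ji}}/n_{ji}!) ∏_i w_i^{α_i−1} Γ(Σ_j n_{ji} + 1)
   / (w_i^{α_i} + Σ_j λ_{ji})^{Σ_j n_{ji} + 1}`. -/
theorem laplace_transform_fractional_gcp (d k : ℕ) (hd : 1 ≤ d) (hk : 1 ≤ k)
    (lam : Fin k → Fin d → ℝ) (hlam : ∀ j i, 0 < lam j i)
    (alpha : Fin d → ℝ) (halpha : ∀ i, alpha i ∈ Set.Ioo (0 : ℝ) 1)
    (w : Fin d → ℝ) (hw : ∀ i, 0 < w i) (n : ℕ) :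
    (∫ x in Set.Ici (0 : Fin d → ℝ),
      (∑' y : Fin k → ℕ,
        if (∑ j, (j.1 + 1) * y j) = n then
          ∏ j, ((∑ i, lam j i * x i) ^ (y j) / (Nat.factorial (y j)) *
            Real.exp (-(∑ i, lam j i * x i)))
        else 0) *
      ∏ i, (w i ^ (alpha i - 1) * Real.exp (-(w i ^ alpha i) * x i)))
    = ∑' y : Fin k → ℕ,
        if (∑ j, (j.1 + 1) * y j) = n then
          ∑' m : Fin k → Fin d → ℕ,
            if (∀ j, (∑ i, m j i) = y j) then
              (∏ j, ∏ i, lam j i ^ (m j i) / (Nat.factorial (m j i))) *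
                ∏ i, (w i ^ (alpha i - 1) *
                  Real.Gamma ((∑ j, m j i : ℕ) + 1) /
                  (w i ^ alpha i + ∑ j, lam j i) ^ ((∑ j, m j i) + 1))
            else 0
        else 0 := by
  classical
  set Sy : Finset (Fin k → ℕ) := Fintype.piFinset (fun _ => Finset.range (n+1)) with hSy
  have hsupp : ∀ y : Fin k → ℕ, y ∉ Sy → (∑ j, (j.1 + 1) * y j) ≠ n := by
    intro y hy hn
    rw [hSy, Fintype.mem_piFinset] at hy
    push_neg at hy
    obtain ⟨j, hj⟩ := hy
    rw [Finset.mem_range] at hj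
    push_neg at hj
    have h1 : (j.1 + 1) * y j ≤ n := hn ▸ Finset.single_le_sum
      (f := fun j : Fin k => (j.1 + 1) * y j) (fun _ _ => Nat.zero_le _) (Finset.mem_univ j)
    have h2 : y j ≤ (j.1 + 1) * y j := Nat.le_mul_of_pos_left _ (Nat.succ_pos _)
    omega
  -- reduce LHS tsum to finite sum
  have hL : ∀ x : Fin d → ℝ,
      (∑' y : Fin k → ℕ,
        if (∑ j, (j.1 + 1) * y j) = n then
          ∏ j, ((∑ i, lam j i * x i) ^ (y j) / (Nat.factorial (y j)) *
            Real.exp (-(∑ i, lam j i * x i)))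
        else 0)
      = ∑ y ∈ Sy,
        if (∑ j, (j.1 + 1) * y j) = n then
          ∏ j, ((∑ i, lam j i * x i) ^ (y j) / (Nat.factorial (y j)) *
            Real.exp (-(∑ i, lam j i * x i)))
        else 0 := by
    intro x
    exact tsum_eq_sum (fun y hy => if_neg (hsupp y hy))
  -- reduce RHS outer tsum
  rw [tsum_eq_sum (s := Sy) (fun y hy => if_neg (hsupp y hy))]
  -- reduce RHS inner tsums
  have hR : ∀ y : Fin k → ℕ,
      (∑' m : Fin k → Fin d → ℕ,
        if (∀ j, (∑ i, m j i) = y j) then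
          (∏ j, ∏ i, lam j i ^ (m j i) / (Nat.factorial (m j i))) *
            ∏ i, (w i ^ (alpha i - 1) *
              Real.Gamma ((∑ j, m j i : ℕ) + 1) /
              (w i ^ alpha i + ∑ j, lam j i) ^ ((∑ j, m j i) + 1))
        else 0)
      = ∑ m ∈ Fintype.piFinset (fun j => Finset.piAntidiag Finset.univ (y j)),
          (∏ j, ∏ i, lam j i ^ (m j i) / (Nat.factorial (m j i))) *
            ∏ i, (w i ^ (alpha i - 1) *
              Real.Gamma ((∑ j, m j i : ℕ) + 1) /
              (w i ^ alpha i + ∑ j, lam j i) ^ ((∑ j, m j i) + 1)) := by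
    intro y
    have hmem : ∀ m : Fin k → Fin d → ℕ,
        m ∈ Fintype.piFinset (fun j => Finset.piAntidiag Finset.univ (y j)) ↔
          (∀ j, (∑ i, m j i) = y j) := by
      intro m
      rw [Fintype.mem_piFinset]
      constructor
      · exact fun h j => (Finset.mem_piAntidiag.mp (h j)).1
      · exact fun h j => Finset.mem_piAntidiag.mpr ⟨h j, fun i _ => Finset.mem_univ i⟩
    rw [tsum_eq_sum (s := Fintype.piFinset (fun j => Finset.piAntidiag Finset.univ (y j)))
      (fun m hm => if_neg (fun hc => hm ((hmem m).mpr hc)))]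
    exact Finset.sum_congr rfl fun m hm => if_pos ((hmem m).mp hm)
  -- rewrite the integrand
  have hint : ∀ x : Fin d → ℝ,
      (∑' y : Fin k → ℕ,
        if (∑ j, (j.1 + 1) * y j) = n then
          ∏ j, ((∑ i, lam j i * x i) ^ (y j) / (Nat.factorial (y j)) *
            Real.exp (-(∑ i, lam j i * x i)))
        else 0) *
      ∏ i, (w i ^ (alpha i - 1) * Real.exp (-(w i ^ alpha i) * x i))
      = ∑ y ∈ Sy,
          if (∑ j, (j.1 + 1) * y j) = n then
            (∏ j, ((∑ i, lam j i * x i) ^ (y j) / (Nat.factorial (y j)) *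
              Real.exp (-(∑ i, lam j i * x i)))) *
            ∏ i, (w i ^ (alpha i - 1) * Real.exp (-(w i ^ alpha i) * x i))
          else 0 := by
    intro x
    rw [hL x, Finset.sum_mul]
    exact Finset.sum_congr rfl fun y _ => by rw [ite_mul, zero_mul]
  rw [setIntegral_congr_fun measurableSet_Ici (fun x _ => hint x)]
  rw [integral_finset_sum]
  · refine Finset.sum_congr rfl fun y _ => ?_
    by_cases hP : (∑ j, (j.1 + 1) * y j) = n
    · simp only [if_pos hP]
      rw [myMiddle lam alpha w hlam hw y, hR y]
    · simp only [if_neg hP, integral_zero]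
  · intro y _
    by_cases hP : (∑ j, (j.1 + 1) * y j) = n
    · simp only [if_pos hP]
      exact myMiddleIntegrable lam alpha w hlam hw y
    · simp only [if_neg hP]
      exact integrable_zero _ _ _
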